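/- For all μ, ν, λ ∈ {0,1,2,3} the product of three Dirac matrices reduces as γ_μ γ_ν γ_λ = g_{μν} γ_λ + g_{νλ} γ_μ − g_{λμ} γ_ν − i ε_{μνλρ} γ^ρ γ_5, where the sum runs over ρ from 0 to 3. -/
import Mathlib


open Matrix

/-- The Minkowski metric `g = diag(+1, -1, -1, -1)` (as complex numbers). -/
noncomputable def minkowski (μ ν : Fin 4) : ℂ :=
  if μ = ν then (if μ = 0 then 1 else -1) else 0

/-- A family `γ^0, γ^1, γ^2, γ^3` of 4×4 complex matrices is a set of Dirac matrices if it
satisfies the anticommutation relations `γ^μ γ^ν + γ^ν γ^μ = 2 g^{μν} I` and the hermiticity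
condition `(γ^μ)† = γ^0 γ^μ γ^0`. -/
def IsDiracFamily (γ : Fin 4 → Matrix (Fin 4) (Fin 4) ℂ) : Prop :=
  (∀ μ ν, γ μ * γ ν + γ ν * γ μ = (2 * minkowski μ ν) • (1 : Matrix (Fin 4) (Fin 4) ℂ)) ∧
  (∀ μ, (γ μ)ᴴ = γ 0 * γ μ * γ 0)

/-- The gamma matrices with lowered index: `γ_μ = g_{μν} γ^ν` (sum over `ν`). -/
noncomputable def lowerGamma (γ : Fin 4 → Matrix (Fin 4) (Fin 4) ℂ) (μ : Fin 4) :
    Matrix (Fin 4) (Fin 4) ℂ :=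
  ∑ ν, minkowski μ ν • γ ν

/-- The sigma matrices `σ^{μν} = (i/2)(γ^μ γ^ν - γ^ν γ^μ)`. -/
noncomputable def sigmaUp (γ : Fin 4 → Matrix (Fin 4) (Fin 4) ℂ) (μ ν : Fin 4) :
    Matrix (Fin 4) (Fin 4) ℂ :=
  (Complex.I / 2) • (γ μ * γ ν - γ ν * γ μ)

/-- The sigma matrices with both indices lowered: `σ_{μν} = g_{μα} g_{νβ} σ^{αβ}`. -/
noncomputable def sigmaLow (γ : Fin 4 → Matrix (Fin 4) (Fin 4) ℂ) (μ ν : Fin 4) :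
    Matrix (Fin 4) (Fin 4) ℂ :=
  ∑ α, ∑ β, (minkowski μ α * minkowski ν β) • sigmaUp γ α β

/-- `γ_5 = i γ^0 γ^1 γ^2 γ^3`. -/
noncomputable def gammaFive (γ : Fin 4 → Matrix (Fin 4) (Fin 4) ℂ) :
    Matrix (Fin 4) (Fin 4) ℂ :=
  Complex.I • (γ 0 * γ 1 * γ 2 * γ 3)

/-- Sign of an integer, valued in `ℤ`. -/
def intSgn (x : ℤ) : ℤ := if 0 < x then 1 else if x < 0 then -1 else 0

/-- The rank-4 Levi-Civita symbol `ε_{abcd}` (lower indices), totally antisymmetric with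
`ε_{0123} = +1`. -/
def levi (a b c d : Fin 4) : ℤ :=
  intSgn ((b.val : ℤ) - a.val) * intSgn ((c.val : ℤ) - a.val) * intSgn ((d.val : ℤ) - a.val) *
  intSgn ((c.val : ℤ) - b.val) * intSgn ((d.val : ℤ) - b.val) * intSgn ((d.val : ℤ) - c.val)

/-- The Levi-Civita symbol with all four indices raised by the Minkowski metric:
`ε^{μνλρ} = g^{μα} g^{νβ} g^{λγ} g^{ρδ} ε_{αβγδ}` (so `ε^{0123} = -1`). -/
noncomputable def leviUp (μ ν lam ρ : Fin 4) : ℂ :=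
  ∑ α, ∑ β, ∑ c, ∑ d,
    minkowski μ α * minkowski ν β * minkowski lam c * minkowski ρ d * ((levi α β c d : ℤ) : ℂ)

set_option maxHeartbeats 4000000

/-- The reduction of a product of three gamma matrices:
`γ_μ γ_ν γ_λ = g_{μν} γ_λ + g_{νλ} γ_μ - g_{λμ} γ_ν - i ε_{μνλρ} γ^ρ γ_5` (sum over `ρ`). -/
theorem three_gamma_reduction (γ : Fin 4 → Matrix (Fin 4) (Fin 4) ℂ)
    (hγ : IsDiracFamily γ) :
    ∀ μ ν lam,
      lowerGamma γ μ * lowerGamma γ ν * lowerGamma γ lam =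
        minkowski μ ν • lowerGamma γ lam + minkowski ν lam • lowerGamma γ μ
          - minkowski lam μ • lowerGamma γ ν
          - Complex.I • ∑ ρ, ((levi μ ν lam ρ : ℤ) : ℂ) • (γ ρ * gammaFive γ) := by
  
  obtain ⟨hac, -⟩ := hγ
  have sq : ∀ a, γ a * γ a = minkowski a a • 1 := by
    intro a
    have h := hac a a
    have h2 : (2:ℂ) • (γ a * γ a) = (2:ℂ) • (minkowski a a • (1:Matrix (Fin 4) (Fin 4) ℂ)) := by
      rw [two_smul, h, smul_smul]
    exact smul_right_injective _ (two_ne_zero) h2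
  have sq' : ∀ a (x : Matrix (Fin 4) (Fin 4) ℂ), γ a * (γ a * x) = minkowski a a • x := by
    intro a x; rw [← mul_assoc, sq, smul_mul_assoc, one_mul]
  have sw : ∀ a b, a ≠ b → ∀ (x : Matrix (Fin 4) (Fin 4) ℂ),
      γ a * (γ b * x) = -(γ b * (γ a * x)) := by
    intro a b hab x
    have h := hac a b
    rw [show minkowski a b = 0 by simp [minkowski, hab]] at h
    simp at h
    rw [← mul_assoc, ← mul_assoc]
    rw [show γ a * γ b = -(γ b * γ a) by linear_combination (norm := noncomm_ring) h]
    simp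
  have sw' : ∀ a b, a ≠ b → γ a * γ b = -(γ b * γ a) := by
    intro a b hab
    have := sw a b hab 1
    simpa using this
  have s0 : ∀ x, γ 0 * (γ 0 * x) = x := by intro x; rw [sq' 0]; simp [minkowski]
  have s1 : ∀ x, γ 1 * (γ 1 * x) = -x := by intro x; rw [sq' 1]; simp [minkowski]
  have s2 : ∀ x, γ 2 * (γ 2 * x) = -x := by intro x; rw [sq' 2]; simp [minkowski]
  have s3 : ∀ x, γ 3 * (γ 3 * x) = -x := by intro x; rw [sq' 3]; simp [minkowski]
  have s0' : γ 0 * γ 0 = 1 := by rw [sq 0]; simp [minkowski]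
  have s1' : γ 1 * γ 1 = -1 := by rw [sq 1]; simp [minkowski]
  have s2' : γ 2 * γ 2 = -1 := by rw [sq 2]; simp [minkowski]
  have s3' : γ 3 * γ 3 = -1 := by rw [sq 3]; simp [minkowski]
  have w10 := sw 1 0 (by decide); have w20 := sw 2 0 (by decide)
  have w21 := sw 2 1 (by decide); have w30 := sw 3 0 (by decide)
  have w31 := sw 3 1 (by decide); have w32 := sw 3 2 (by decide)
  have w10' := sw' 1 0 (by decide); have w20' := sw' 2 0 (by decide)
  have w21' := sw' 2 1 (by decide); have w30' := sw' 3 0 (by decide)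
  have w31' := sw' 3 1 (by decide); have w32' := sw' 3 2 (by decide)
  have v0 : ((0:Fin 4)).val = 0 := rfl
  have v1 : ((1:Fin 4)).val = 1 := rfl
  have v2 : ((2:Fin 4)).val = 2 := rfl
  have v3 : ((3:Fin 4)).val = 3 := rfl
  intro μ ν lam
  fin_cases μ <;> fin_cases ν <;> fin_cases lam <;>
    simp only [lowerGamma, gammaFive, minkowski, levi, intSgn, Fin.sum_univ_four] <;>
    norm_num [Fin.ext_iff, v0, v1, v2, v3] <;>
    simp only [mul_assoc, smul_mul_assoc, mul_smul_comm, smul_smul, neg_mul, mul_neg,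
      neg_neg, smul_neg, neg_smul, one_smul, Complex.I_mul_I,
      w10, w20, w21, w30, w31, w32, w10', w20', w21', w30', w31', w32',
      s0, s1, s2, s3, s0', s1', s2', s3'] <;>
    try norm_num [Fin.ext_iff, v0, v1, v2, v3]
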